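/- A digraph G with all in-degrees and out-degrees at least 1 is strongly connected if and only if either G is a single directed cycle, or G is a preheart (has no directed-cycle component) and its heart H(G) is strongly connected. -/

import Mathlib

section

variable {V : Type*}

/-- Out-degree of a vertex. -/
noncomputable def outdeg (A : V → V → Prop) (v : V) : ℕ := Nat.card {w : V // A v w}

/-- In-degree of a vertex. -/
noncomputable def indeg (A : V → V → Prop) (v : V) : ℕ := Nat.card {u : V // A u v}

/-- A vertex of the heart: total degree at least 3. -/
def bigVx (A : V → V → Prop) (v : V) : Prop := 3 ≤ outdeg A v + indeg A v

/-- Arcs of the heart `H(G)`: a directed path between heart vertices all of whose internal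
vertices have total degree 2 (in- and out-degree 1). -/
def heartArc (A : V → V → Prop) (u w : V) : Prop :=
  bigVx A u ∧ bigVx A w ∧
    ∃ v : V, Relation.ReflTransGen (fun a b => A a b ∧ ¬ bigVx A b) u v ∧ A v w

/-- Unique out-neighbour when the out-degree is 1. -/
lemma out_succ {A : V → V → Prop} {v : V} (h : outdeg A v = 1) :
    ∃ w, A v w ∧ ∀ w', A v w' → w' = w := by
  rw [outdeg, Nat.card_eq_one_iff_exists] at h
  obtain ⟨⟨w, hw⟩, huniq⟩ := h
  exact ⟨w, hw, fun w' hw' => congrArg Subtype.val (huniq ⟨w', hw'⟩)⟩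

/-- Unique in-neighbour when the in-degree is 1. -/
lemma in_pred {A : V → V → Prop} {v : V} (h : indeg A v = 1) :
    ∃ w, A w v ∧ ∀ w', A w' v → w' = w :=
  out_succ (A := fun a b => A b a) h

lemma bigVx_flip {A : V → V → Prop} {v : V} :
    bigVx (fun a b => A b a) v ↔ bigVx A v := by
  have h1 : outdeg (fun a b => A b a) v = indeg A v := rfl
  have h2 : indeg (fun a b => A b a) v = outdeg A v := rfl
  unfold bigVx
  rw [h1, h2]
  omega

lemma rtg_flip {r : V → V → Prop} {a b : V}
    (h : Relation.ReflTransGen (fun x y => r y x) a b) :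
    Relation.ReflTransGen r b a := by
  induction h with
  | refl => exact .refl
  | tail _ h ih => exact Relation.ReflTransGen.head h ih

/-- In a graph with all in- and out-degrees 1, every arc can be reversed by a path. -/
lemma cycle_rev [Fintype V] {A : V → V → Prop}
    (hdeg : ∀ v, outdeg A v = 1 ∧ indeg A v = 1) :
    ∀ a b, A a b → Relation.ReflTransGen A b a := by
  have hex : ∀ v, ∃ w, A v w ∧ ∀ w', A v w' → w' = w := fun v => out_succ (hdeg v).1
  choose f hf1 hf2 using hex
  have hinj : Function.Injective f := by
    intro x y hxy
    obtain ⟨p, hp, hp2⟩ := in_pred (hdeg (f x)).2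
    have h1 : x = p := hp2 x (hf1 x)
    have h2 : y = p := hp2 y (by rw [hxy]; exact hf1 y)
    rw [h1, h2]
  have hchain : ∀ (n : ℕ) (a : V), Relation.ReflTransGen A (f a) (f^[n] (f a)) := by
    intro n a
    induction n with
    | zero => exact .refl
    | succ m ih =>
      refine ih.tail ?_
      rw [Function.iterate_succ_apply']
      exact hf1 _
  intro a b hab
  obtain ⟨i, j, hij, heq⟩ := Finite.exists_ne_map_eq_of_infinite (fun n : ℕ => f^[n] a)
  wlog hlt : i < j generalizing i j
  · exact this j i hij.symm heq.symm (by omega)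
  have hcan : f^[j - i] a = a := by
    have : f^[i] (f^[j - i] a) = f^[i] a := by
      rw [← Function.iterate_add_apply]
      have : i + (j - i) = j := by omega
      rw [this]
      exact heq.symm
    exact hinj.iterate i this
  have hb : b = f a := hf2 a b hab
  obtain ⟨m, hm⟩ : ∃ m, j - i = m + 1 := ⟨j - i - 1, by omega⟩
  have : f^[m] (f a) = a := by
    have := hcan
    rw [hm, Function.iterate_succ_apply] at this
    exact this
  rw [hb]
  have h3 := hchain m a
  rwa [this] at h3

/-- From each vertex of a preheart one can reach a big vertex along directed arcs. -/
lemma reach_big [Fintype V] (A : V → V → Prop)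
    (hout : ∀ v : V, 1 ≤ outdeg A v) (hin : ∀ v : V, 1 ≤ indeg A v)
    (hpre : ∀ v : V, ∃ w : V,
      Relation.ReflTransGen (fun a b => A a b ∨ A b a) v w ∧ bigVx A w)
    (v : V) : ∃ w : V, Relation.ReflTransGen A v w ∧ bigVx A w := by
  by_contra hcon
  push_neg at hcon
  set S : Set V := {x | Relation.ReflTransGen A v x} with hS
  have hvS : v ∈ S := Relation.ReflTransGen.refl
  have hSdeg : ∀ x ∈ S, outdeg A x = 1 ∧ indeg A x = 1 := by
    intro x hx
    have hb := hcon x hx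
    have h1 := hout x
    have h2 := hin x
    unfold bigVx at hb
    omega
  choose F hF1 hF2 using fun x : S => out_succ (hSdeg x.1 x.2).1
  have hFS : ∀ x : S, F x ∈ S := fun x => x.2.tail (hF1 x)
  have hFinj : Function.Injective (fun x : S => (⟨F x, hFS x⟩ : S)) := by
    intro x y hxy
    have hFeq : F x = F y := congrArg Subtype.val hxy
    obtain ⟨p, hp, hp2⟩ := in_pred (hSdeg (F x) (hFS x)).2
    have h1 : (x : V) = p := hp2 x (hF1 x)
    have h2 : (y : V) = p := hp2 y (by rw [hFeq]; exact hF1 y)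
    exact Subtype.ext (h1.trans h2.symm)
  have hFsurj := Finite.injective_iff_surjective.mp hFinj
  have hpred : ∀ x ∈ S, ∀ y, A y x → y ∈ S := by
    intro x hx y hyx
    obtain ⟨z, hz⟩ := hFsurj ⟨x, hx⟩
    have hzx : F z = x := congrArg Subtype.val hz
    obtain ⟨p, hp, hp2⟩ := in_pred (hSdeg x hx).2
    have h1 : y = p := hp2 y hyx
    have h2 : (z : V) = p := hp2 z (by rw [← hzx] at *; exact hF1 z)
    rw [h1, ← h2]
    exact z.2
  have hweak : ∀ w, Relation.ReflTransGen (fun a b => A a b ∨ A b a) v w → w ∈ S := by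
    intro w hw
    induction hw with
    | refl => exact hvS
    | tail _ hbc ih =>
      rcases hbc with h | h
      · exact ih.tail h
      · exact hpred _ ih _ h
  obtain ⟨w, hw, hwbig⟩ := hpre v
  exact hcon w (hweak w hw) hwbig

lemma heart_sub {A : V → V → Prop} {u w : V} (h : heartArc A u w) :
    Relation.ReflTransGen A u w := by
  obtain ⟨_, _, v, hv, hvw⟩ := h
  exact (Relation.ReflTransGen.mono (fun a b (hab : A a b ∧ ¬ bigVx A b) => hab.1) _ _ hv).tail hvw

/-- Decomposition of a directed path from a big vertex: a heart path followed by a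
path through non-big vertices. -/
lemma seg {A : V → V → Prop} {u : V} (hu : bigVx A u) :
    ∀ v, Relation.ReflTransGen A u v →
      ∃ x, bigVx A x ∧ Relation.ReflTransGen (heartArc A) u x ∧
        Relation.ReflTransGen (fun a b => A a b ∧ ¬ bigVx A b) x v := by
  intro v hv
  induction hv with
  | refl => exact ⟨u, hu, .refl, .refl⟩
  | @tail b c _ hbc ih =>
    obtain ⟨x, hx, hux, hxb⟩ := ih
    by_cases hc : bigVx A c
    · exact ⟨c, hc, hux.tail ⟨hx, hc, b, hxb, hbc⟩, .refl⟩
    · exact ⟨x, hx, hux, hxb.tail ⟨hbc, hc⟩⟩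

lemma heart_path {A : V → V → Prop} {x y : V}
    (h : Relation.ReflTransGen (heartArc A) x y) : Relation.ReflTransGen A x y := by
  induction h with
  | refl => exact .refl
  | tail _ hbc ih => exact ih.trans (heart_sub hbc)

lemma nonbig_refl {A : V → V → Prop} {x w : V} (hw : bigVx A w)
    (h : Relation.ReflTransGen (fun a b => A a b ∧ ¬ bigVx A b) x w) : x = w := by
  rcases h.cases_tail with h | ⟨c, _, hcw⟩
  · exact h.symm
  · exact absurd hw hcw.2

theorem stmt_17 [Fintype V] (A : V → V → Prop)
    (hout : ∀ v : V, 1 ≤ outdeg A v) (hin : ∀ v : V, 1 ≤ indeg A v) :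
    (∀ u v : V, Relation.ReflTransGen A u v) ↔
      ((∀ v : V, outdeg A v = 1 ∧ indeg A v = 1) ∧
        ∀ u v : V, Relation.ReflTransGen (fun a b => A a b ∨ A b a) u v) ∨
      ((∀ v : V, ∃ w : V, Relation.ReflTransGen (fun a b => A a b ∨ A b a) v w ∧ bigVx A w) ∧
        ∀ u w : V, bigVx A u → bigVx A w → Relation.ReflTransGen (heartArc A) u w) := by
  constructor
  · intro hstr
    by_cases hdeg : ∀ v : V, outdeg A v = 1 ∧ indeg A v = 1
    · exact Or.inl ⟨hdeg, fun u v => Relation.ReflTransGen.mono (fun a b (h : A a b) => Or.inl h) _ _ (hstr u v)⟩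
    · push_neg at hdeg
      obtain ⟨v0, hv0⟩ := hdeg
      have hbig : bigVx A v0 := by
        have h1 := hout v0
        have h2 := hin v0
        unfold bigVx
        by_cases ho : outdeg A v0 = 1
        · have := hv0 ho; omega
        · omega
      refine Or.inr ⟨fun v => ⟨v0, Relation.ReflTransGen.mono (fun a b (h : A a b) => Or.inl h) _ _ (hstr v v0), hbig⟩, ?_⟩
      intro u w hu hw
      obtain ⟨x, hx, hux, hxw⟩ := seg hu w (hstr u w)
      rwa [nonbig_refl hw hxw] at hux
  · rintro (⟨hdeg, hweakconn⟩ | ⟨hpre, hheart⟩) u v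
    · have hrev := cycle_rev hdeg
      have key : ∀ a b : V, Relation.ReflTransGen (fun a b => A a b ∨ A b a) a b →
          Relation.ReflTransGen A a b := by
        intro a b h
        induction h with
        | refl => exact .refl
        | tail _ hbc ih =>
          rcases hbc with h | h
          · exact ih.tail h
          · exact ih.trans (hrev _ _ h)
      exact key u v (hweakconn u v)
    · obtain ⟨x, hux, hbx⟩ := reach_big A hout hin hpre u
      have hpre' : ∀ z : V, ∃ w : V,
          Relation.ReflTransGen (fun a b => (fun a b => A b a) a b ∨ (fun a b => A b a) b a) z w ∧
            bigVx (fun a b => A b a) w := by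
        intro z
        obtain ⟨w, hw, hbw⟩ := hpre z
        exact ⟨w, Relation.ReflTransGen.mono (fun a b (h : A a b ∨ A b a) => h.symm) _ _ hw, bigVx_flip.mpr hbw⟩
      obtain ⟨y, hvy, hby⟩ :=
        reach_big (fun a b => A b a) (fun z => hin z) (fun z => hout z) hpre' v
      have hyv : Relation.ReflTransGen A y v := rtg_flip hvy
      have hby' : bigVx A y := bigVx_flip.mp hby
      have hxy : Relation.ReflTransGen A x y := heart_path (hheart x y hbx hby')
      exact (hux.trans hxy).trans hyv

end
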